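/- Let n ≥ 2, α ∈ [0, 1/2], τ' ∈ (−1,1), X a measurable space, and D a probability measure on X × [n]. Then for every measurable g : X → R^n, er^{ℓ^α}_D[pred^OVA_{τ'} ∘ g] − er^{ℓ^α,*}_D ≤ ( er^{ψ^{OVA,α}}_D[g] − er^{ψ^{OVA,α},*}_D ) / ( 2(1 − |τ'|) ). -/

import Mathlib

open scoped BigOperators
open MeasureTheory
open scoped ENNReal

/-- The abstain(α) loss: `ℓ^α(y,t) = 0` if `t = y`, `α` if `t = n+1`, and `1` otherwise. -/
noncomputable def abstainLoss (n : ℕ) (α : ℝ) (y : Fin n) (t : Fin (n + 1)) : ℝ :=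
  if t = Fin.last n then α else if (t : ℕ) = (y : ℕ) then 0 else 1

/-- Generalized one-vs-all hinge surrogate:
`ψ^{OVA,α}(y,u) = 2α(1 − u_y)_+ + 2(1−α) Σ_{i≠y} (1 + u_i)_+`. -/
noncomputable def psiOVAa (n : ℕ) (α : ℝ) (y : Fin n) (u : Fin n → ℝ) : ℝ :=
  2 * α * max (1 - u y) 0 + 2 * (1 - α) * ∑ i ∈ Finset.univ.erase y, max (1 + u i) 0

/-- `pred^OVA_τ`: the smallest index attaining `max_i u_i` if `max_j u_j > τ`,
and `n+1` otherwise. -/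
noncomputable def predOVA (n : ℕ) (τ : ℝ) (u : Fin n → ℝ) : Fin (n + 1) :=
  if h : ∃ y : Fin n, (∀ i, u i ≤ u y) ∧ τ < u y then
    Fin.castSucc ((Finset.univ.filter fun y : Fin n => (∀ i, u i ≤ u y) ∧ τ < u y).min'
      (by obtain ⟨y, hy⟩ := h; exact ⟨y, by simpa using hy⟩))
  else Fin.last n


open scoped BigOperators

/-- excess of φ above 2*min A B is nonneg -/
lemma phi_ge_min (A B s : ℝ) (hA : 0 ≤ A) (hB : 0 ≤ B) :
    2 * min A B ≤ A * max (1 - s) 0 + B * max (1 + s) 0 := by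
  have h1 : (1:ℝ) - s ≤ max (1 - s) 0 := le_max_left _ _
  have h2 : (0:ℝ) ≤ max (1 - s) 0 := le_max_right _ _
  have h3 : (1:ℝ) + s ≤ max (1 + s) 0 := le_max_left _ _
  have h4 : (0:ℝ) ≤ max (1 + s) 0 := le_max_right _ _
  rcases le_total A B with h | h
  · rw [min_eq_left h]
    nlinarith [mul_nonneg hA (sub_nonneg.2 h1), mul_nonneg hA (sub_nonneg.2 h3),
      mul_nonneg (sub_nonneg.2 h) h4]
  · rw [min_eq_right h]
    nlinarith [mul_nonneg hB (sub_nonneg.2 h1), mul_nonneg hB (sub_nonneg.2 h3),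
      mul_nonneg (sub_nonneg.2 h) h2]

/-- lower bound on excess when B ≥ A and s ≥ c. -/
lemma er_lb (A B s c : ℝ) (hA : 0 ≤ A) (hAB : A ≤ B) (hc0 : -1 ≤ c) (hc1 : c ≤ 1)
    (hs : c ≤ s) :
    2 * A + (B - A) * (1 + c) ≤ A * max (1 - s) 0 + B * max (1 + s) 0 := by
  rcases le_total s 1 with h | h
  · rw [max_eq_left (by linarith), max_eq_left (by linarith)]
    nlinarith [mul_nonneg (sub_nonneg.2 hAB) (sub_nonneg.2 hs)]
  · rw [max_eq_right (by linarith : (1:ℝ) - s ≤ 0), max_eq_left (by linarith)]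
    nlinarith [mul_nonneg (hA.trans hAB) (by linarith : (0:ℝ) ≤ s - 1),
      mul_nonneg (sub_nonneg.2 hAB) (by linarith : (0:ℝ) ≤ 1 - c), hA.trans hAB]

/-- lower bound on excess when A ≥ B and min s 1 ≤ c. -/
lemma eM_lb (A B s c : ℝ) (hB : 0 ≤ B) (hBA : B ≤ A) (hc0 : -1 ≤ c) (hc1 : c ≤ 1)
    (hs : min s 1 ≤ c) :
    2 * B + (A - B) * (1 - c) ≤ A * max (1 - s) 0 + B * max (1 + s) 0 := by
  rcases le_total s 1 with h | h
  · rw [min_eq_left h] at hs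
    rw [max_eq_left (by linarith)]
    have h4 : (1:ℝ) + s ≤ max (1 + s) 0 := le_max_left _ _
    have h5 : (0:ℝ) ≤ max (1 + s) 0 := le_max_right _ _
    rcases le_total (-1 : ℝ) s with h' | h'
    · rw [max_eq_left (by linarith)]
      nlinarith [mul_nonneg (sub_nonneg.2 hBA) (sub_nonneg.2 hs)]
    · rw [max_eq_right (by linarith)]
      nlinarith [mul_nonneg (sub_nonneg.2 hBA) (by linarith : (1:ℝ) - c ≥ 0)]
  · rw [min_eq_right h] at hs
    have hc : c = 1 := le_antisymm hc1 hs
    subst hc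
    have := phi_ge_min A B s (le_trans hB hBA) hB
    rw [min_eq_right hBA] at this
    nlinarith

/-- linear combination bound -/
lemma lin_comb (P Q c τ : ℝ) (hQ : 0 ≤ Q) (hPQ : Q ≤ P) (hτ0 : -1 < τ) (hτ1 : τ < 1)
    (hc : τ ≤ c) (hc1 : c ≤ 1) :
    (1 - |τ|) * (P + Q) ≤ P * (1 + c) + Q * (1 - c) := by
  rcases abs_cases τ with ⟨h, _⟩ | ⟨h, _⟩ <;> rw [h] <;>
    nlinarith [mul_nonneg (sub_nonneg.2 hPQ) (sub_nonneg.2 hc), mul_nonneg hQ (sub_nonneg.2 hc)]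

lemma predOVA_spec (n : ℕ) [NeZero n] (τ : ℝ) (u : Fin n → ℝ) :
    (∃ r : Fin n, predOVA n τ u = Fin.castSucc r ∧ (∀ i, u i ≤ u r) ∧ τ < u r) ∨
    (predOVA n τ u = Fin.last n ∧ ∀ i, u i ≤ τ) := by
  unfold predOVA
  split_ifs with h
  · left
    refine ⟨_, rfl, ?_⟩
    have hmem := Finset.min'_mem
      (Finset.univ.filter fun y : Fin n => (∀ i, u i ≤ u y) ∧ τ < u y)
      (by obtain ⟨y, hy⟩ := h; exact ⟨y, by simpa using hy⟩)
    simpa using (Finset.mem_filter.1 hmem).2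
  · right
    refine ⟨rfl, fun i => ?_⟩
    push_neg at h
    obtain ⟨r, -, hr⟩ := Finset.exists_max_image (Finset.univ : Finset (Fin n)) u
      ⟨⟨0, Nat.pos_of_ne_zero (NeZero.ne n)⟩, Finset.mem_univ _⟩
    have hrmax : ∀ j, u j ≤ u r := fun j => hr j (Finset.mem_univ j)
    exact (hrmax i).trans (h r hrmax)

lemma predOVA_preimage_measurable (n : ℕ) (τ : ℝ) (t : Fin (n + 1)) :
    MeasurableSet (predOVA n τ ⁻¹' {t}) := by
  have hC : ∀ y : Fin n, MeasurableSet {u : Fin n → ℝ | (∀ i, u i ≤ u y) ∧ τ < u y} := by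
    intro y
    have h1 : MeasurableSet {u : Fin n → ℝ | ∀ i, u i ≤ u y} := by
      have he : {u : Fin n → ℝ | ∀ i, u i ≤ u y} = ⋂ i, {u : Fin n → ℝ | u i ≤ u y} := by
        ext u; simp
      rw [he]
      exact MeasurableSet.iInter fun i =>
        measurableSet_le (measurable_pi_apply i) (measurable_pi_apply y)
    have h2 : MeasurableSet {u : Fin n → ℝ | τ < u y} :=
      measurableSet_lt measurable_const (measurable_pi_apply y)
    exact h1.inter h2
  induction t using Fin.lastCases with
  | last =>
    have : predOVA n τ ⁻¹' {Fin.last n} =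
        (⋃ y : Fin n, {u : Fin n → ℝ | (∀ i, u i ≤ u y) ∧ τ < u y})ᶜ := by
      ext u
      simp only [Set.mem_preimage, Set.mem_singleton_iff, Set.mem_compl_iff, Set.mem_iUnion,
        Set.mem_setOf_eq]
      unfold predOVA
      split_ifs with h
      · exact ⟨fun hc => absurd hc (Fin.castSucc_lt_last _).ne, fun hc => absurd h hc⟩
      · exact ⟨fun _ => h, fun _ => rfl⟩
    rw [this]
    exact (MeasurableSet.iUnion fun y => hC y).compl
  | cast r =>
    have : predOVA n τ ⁻¹' {Fin.castSucc r} =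
        {u : Fin n → ℝ | (∀ i, u i ≤ u r) ∧ τ < u r} ∩
          ⋂ r' : Fin n, {u : Fin n → ℝ | ((∀ i, u i ≤ u r') ∧ τ < u r') → r ≤ r'} := by
      ext u
      simp only [Set.mem_preimage, Set.mem_singleton_iff, Set.mem_inter_iff, Set.mem_iInter,
        Set.mem_setOf_eq]
      unfold predOVA
      split_ifs with h
      · rw [Fin.castSucc_inj]
        set F := Finset.univ.filter fun y : Fin n => (∀ i, u i ≤ u y) ∧ τ < u y with hF
        have hne : F.Nonempty := by obtain ⟨y, hy⟩ := h; exact ⟨y, by simp [hF, hy]⟩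
        constructor
        · rintro rfl
          have hmem := (Finset.mem_filter.1 (Finset.min'_mem F hne)).2
          exact ⟨hmem, fun r' hr' => Finset.min'_le F r' (by simp [hF, hr'])⟩
        · rintro ⟨hr, hmin⟩
          exact le_antisymm (Finset.min'_le F r (by simp [hF, hr]))
            (Finset.le_min' F _ r (fun y hy => hmin y (by simpa [hF] using hy)))
      · constructor
        · intro hc
          exact absurd hc.symm (by simp [Fin.ext_iff, (Fin.castSucc_lt_last _).ne])
        · rintro ⟨hr, -⟩
          exact absurd ⟨r, hr⟩ h
    rw [this]
    refine (hC r).inter (MeasurableSet.iInter fun r' => ?_)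
    by_cases hrr : r ≤ r'
    · have : {u : Fin n → ℝ | ((∀ i, u i ≤ u r') ∧ τ < u r') → r ≤ r'} = Set.univ := by
        ext u; simp [hrr]
      rw [this]; exact MeasurableSet.univ
    · have : {u : Fin n → ℝ | ((∀ i, u i ≤ u r') ∧ τ < u r') → r ≤ r'} =
          {u : Fin n → ℝ | (∀ i, u i ≤ u r') ∧ τ < u r'}ᶜ := by
        ext u; simp only [Set.mem_setOf_eq, Set.mem_compl_iff]
        constructor
        · intro hu hc; exact hrr (hu hc)
        · intro hu; intro hc; exact absurd hc hu
      rw [this]; exact (hC r').compl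

lemma predOVA_measurable (n : ℕ) (τ : ℝ) : Measurable (predOVA n τ) :=
  measurable_to_countable' (predOVA_preimage_measurable n τ)

lemma sum_loss_last (n : ℕ) (α : ℝ) (q : Fin n → ℝ) (hq1 : ∑ i, q i = 1) :
    ∑ y, q y * abstainLoss n α y (Fin.last n) = α := by
  simp [abstainLoss, ← Finset.sum_mul, hq1]

lemma sum_loss_cast (n : ℕ) (α : ℝ) (q : Fin n → ℝ) (hq1 : ∑ i, q i = 1)
    (t : Fin (n + 1)) (ht : t ≠ Fin.last n) (i : Fin n) (hi : (t : ℕ) = (i : ℕ)) :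
    ∑ y, q y * abstainLoss n α y t = 1 - q i := by
  have key : ∀ y, q y * abstainLoss n α y t = q y - (if y = i then q y else 0) := by
    intro y
    by_cases hy : y = i
    · subst hy; simp [abstainLoss, ht, hi]
    · have : ((t : ℕ) = (y : ℕ)) = False := by
        simp only [hi, eq_iff_iff, iff_false]
        exact fun hc => hy (Fin.ext hc.symm)
      simp [abstainLoss, ht, this, hy]
  rw [Finset.sum_congr rfl (fun y _ => key y), Finset.sum_sub_distrib, hq1,
    Finset.sum_ite_eq' Finset.univ i q, if_pos (Finset.mem_univ i)]

lemma psi_rearrange (n : ℕ) (α : ℝ) (q u : Fin n → ℝ) (hq1 : ∑ i, q i = 1) :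
    ∑ y, q y * psiOVAa n α y u =
      ∑ i, (2 * α * q i * max (1 - u i) 0 + 2 * (1 - α) * (1 - q i) * max (1 + u i) 0) := by
  unfold psiOVAa
  set S := ∑ i, max (1 + u i) 0 with hS
  have h1 : ∀ y : Fin n, ∑ i ∈ Finset.univ.erase y, max (1 + u i) 0 =
      S - max (1 + u y) 0 :=
    fun y => Finset.sum_erase_eq_sub (Finset.mem_univ y)
  have key : ∑ y, q y * (2 * (1 - α) * ∑ i ∈ Finset.univ.erase y, max (1 + u i) 0) =
      ∑ i, 2 * (1 - α) * (1 - q i) * max (1 + u i) 0 := by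
    have e1 : ∑ y, q y * (2 * (1 - α) * ∑ i ∈ Finset.univ.erase y, max (1 + u i) 0) =
        (∑ y, q y * (2 * (1 - α) * S)) - ∑ y, 2 * (1 - α) * (q y * max (1 + u y) 0) := by
      rw [← Finset.sum_sub_distrib]
      exact Finset.sum_congr rfl fun y _ => by rw [h1 y]; ring
    have e2 : ∑ y, q y * (2 * (1 - α) * S) = 2 * (1 - α) * S := by
      rw [← Finset.sum_mul, hq1, one_mul]
    have e3 : ∑ i, 2 * (1 - α) * (1 - q i) * max (1 + u i) 0 =
        2 * (1 - α) * S - ∑ y, 2 * (1 - α) * (q y * max (1 + u y) 0) := by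
      rw [hS, Finset.mul_sum, ← Finset.sum_sub_distrib]
      exact Finset.sum_congr rfl fun i _ => by ring
    rw [e1, e2, e3]
  calc ∑ y, q y * (2 * α * max (1 - u y) 0 +
        2 * (1 - α) * ∑ i ∈ Finset.univ.erase y, max (1 + u i) 0)
      = (∑ y, 2 * α * q y * max (1 - u y) 0) +
        ∑ y, q y * (2 * (1 - α) * ∑ i ∈ Finset.univ.erase y, max (1 + u i) 0) := by
        rw [← Finset.sum_add_distrib]
        refine Finset.sum_congr rfl fun y _ => ?_; ring
    _ = _ := by rw [key, ← Finset.sum_add_distrib]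

lemma pair_sum_le (n : ℕ) (q : Fin n → ℝ) (hq0 : ∀ i, 0 ≤ q i) (hq1 : ∑ i, q i = 1)
    {i j : Fin n} (hij : i ≠ j) : q i + q j ≤ 1 := by
  have h1 : q i + q j = ∑ y ∈ ({i, j} : Finset (Fin n)), q y := (Finset.sum_pair hij).symm
  rw [h1, ← hq1]
  exact Finset.sum_le_sum_of_subset_of_nonneg (Finset.subset_univ _) fun y _ _ => hq0 y

lemma core_calibration (n : ℕ) (α τ : ℝ) (hα0 : 0 ≤ α) (hα1 : α ≤ 1/2)
    (hτ0 : -1 < τ) (hτ1 : τ < 1)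
    (q u : Fin n → ℝ) (hq0 : ∀ i, 0 ≤ q i) (hq1 : ∑ i, q i = 1)
    (Mi : Fin n) (hM : ∀ i, q i ≤ q Mi) :
    2 * (1 - |τ|) * (∑ y, q y * abstainLoss n α y (predOVA n τ u)) ≤
      2 * (1 - |τ|) * min α (1 - q Mi) +
      (∑ y, q y * psiOVAa n α y u
        - ∑ i, 2 * min (2 * α * q i) (2 * (1 - α) * (1 - q i))) := by
  haveI : NeZero n := ⟨(Fin.pos Mi).ne'⟩
  have hτa : |τ| < 1 := abs_lt.2 ⟨hτ0, hτ1⟩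
  have hτs : -τ ≤ |τ| := neg_le_abs τ
  have hτs' : τ ≤ |τ| := le_abs_self τ
  have hc0 : (0:ℝ) < 2 * (1 - |τ|) := by linarith
  have hqle1 : ∀ i, q i ≤ 1 := by
    intro i
    calc q i ≤ ∑ y, q y := Finset.single_le_sum (fun y _ => hq0 y) (Finset.mem_univ i)
    _ = 1 := hq1
  -- rewrite the psi part
  rw [psi_rearrange n α q u hq1, ← Finset.sum_sub_distrib]
  set F : Fin n → ℝ := fun i =>
    2 * α * q i * max (1 - u i) 0 + 2 * (1 - α) * (1 - q i) * max (1 + u i) 0 -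
      2 * min (2 * α * q i) (2 * (1 - α) * (1 - q i)) with hFdef
  have hF0 : ∀ i, 0 ≤ F i := by
    intro i
    have := phi_ge_min (2 * α * q i) (2 * (1 - α) * (1 - q i)) (u i)
      (by nlinarith [hq0 i]) (by nlinarith [hqle1 i])
    simp only [hFdef]
    linarith
  have hFsum : ∀ i, F i ≤ ∑ j, F j :=
    fun i => Finset.single_le_sum (fun j _ => hF0 j) (Finset.mem_univ i)
  have hFS : 0 ≤ ∑ j, F j := Finset.sum_nonneg fun j _ => hF0 j
  rcases predOVA_spec n τ u with ⟨r, hpred, hmax, hτr⟩ | ⟨hpred, hub⟩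
  · -- predict class r
    rw [hpred, sum_loss_cast n α q hq1 (Fin.castSucc r) (Fin.castSucc_lt_last r).ne r
      (by simp)]
    rcases le_total α (1 - q Mi) with hcase | hcase
    · rw [min_eq_left hcase]
      rcases le_total (1 - α) (q r) with h | h
      · have : 2 * (1 - |τ|) * (1 - q r) ≤ 2 * (1 - |τ|) * α :=
          mul_le_mul_of_nonneg_left (by linarith) hc0.le
        linarith
      · -- use coordinate r
        have hA : (0:ℝ) ≤ 2 * α * q r := mul_nonneg (by linarith) (hq0 r)
        have hAB : 2 * α * q r ≤ 2 * (1 - α) * (1 - q r) := by nlinarith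
        have key := er_lb (2 * α * q r) (2 * (1 - α) * (1 - q r)) (u r) τ hA hAB
          hτ0.le hτ1.le hτr.le
        have hmin : min (2 * α * q r) (2 * (1 - α) * (1 - q r)) = 2 * α * q r :=
          min_eq_left hAB
        have hprod : (2 * (1 - α) * (1 - q r) - 2 * α * q r) * (1 - |τ|) ≤
            (2 * (1 - α) * (1 - q r) - 2 * α * q r) * (1 + τ) :=
          mul_le_mul_of_nonneg_left (by linarith) (by linarith)
        have hexp : (2 * (1 - α) * (1 - q r) - 2 * α * q r) * (1 - |τ|) =
            2 * (1 - |τ|) * (1 - α - q r) := by ring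
        have hFr : (2 * (1 - α) * (1 - q r) - 2 * α * q r) * (1 + τ) ≤ F r := by
          have hFr' : F r = 2 * α * q r * max (1 - u r) 0 +
              2 * (1 - α) * (1 - q r) * max (1 + u r) 0 - 2 * (2 * α * q r) := by
            simp only [hFdef, hmin]
          rw [hFr']; linarith
        have := hFsum r
        linarith
    · rw [min_eq_right hcase]
      rcases le_or_gt (q Mi) (q r) with h | h
      · have : 2 * (1 - |τ|) * (1 - q r) ≤ 2 * (1 - |τ|) * (1 - q Mi) :=
          mul_le_mul_of_nonneg_left (by linarith) hc0.le
        linarith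
      · have hne : r ≠ Mi := fun hc => absurd (hc ▸ h) (lt_irrefl _)
        have hpair : q r + q Mi ≤ 1 := pair_sum_le n q hq0 hq1 hne
        have hqMi : 1 - α ≤ q Mi := by linarith
        have hqr : q r ≤ 1 - α := by linarith
        set c' := min (u r) 1 with hc'
        have hc'0 : -1 ≤ c' := le_min (by linarith) (by norm_num)
        have hc'1 : c' ≤ 1 := min_le_right _ _
        have hτc' : τ ≤ c' := le_min hτr.le hτ1.le
        have hAr : (0:ℝ) ≤ 2 * α * q r := mul_nonneg (by linarith) (hq0 r)
        have hABr : 2 * α * q r ≤ 2 * (1 - α) * (1 - q r) := by nlinarith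
        have hBMi : (0:ℝ) ≤ 2 * (1 - α) * (1 - q Mi) := by nlinarith [hqle1 Mi]
        have hBAMi : 2 * (1 - α) * (1 - q Mi) ≤ 2 * α * q Mi := by nlinarith
        have h1 := er_lb (2 * α * q r) (2 * (1 - α) * (1 - q r)) (u r) c' hAr hABr
          hc'0 hc'1 (min_le_left _ _)
        have h2 := eM_lb (2 * α * q Mi) (2 * (1 - α) * (1 - q Mi)) (u Mi) c' hBMi hBAMi
          hc'0 hc'1 (min_le_min (hmax Mi) le_rfl)
        set P := 2 * (1 - α) * (1 - q r) - 2 * α * q r with hP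
        set Q := 2 * α * q Mi - 2 * (1 - α) * (1 - q Mi) with hQ
        have hQ0 : 0 ≤ Q := by simp only [hQ]; linarith
        have hPQ : Q ≤ P := by simp only [hP, hQ]; nlinarith
        have h3 := lin_comb P Q c' τ hQ0 hPQ hτ0 hτ1 hτc' hc'1
        have hFr : P * (1 + c') ≤ F r := by
          have hmin : min (2 * α * q r) (2 * (1 - α) * (1 - q r)) = 2 * α * q r :=
            min_eq_left hABr
          have hFr' : F r = 2 * α * q r * max (1 - u r) 0 +
              2 * (1 - α) * (1 - q r) * max (1 + u r) 0 - 2 * (2 * α * q r) := by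
            simp only [hFdef, hmin]
          rw [hFr']; linarith
        have hFMi : Q * (1 - c') ≤ F Mi := by
          have hmin : min (2 * α * q Mi) (2 * (1 - α) * (1 - q Mi)) =
              2 * (1 - α) * (1 - q Mi) := min_eq_right hBAMi
          have hFMi' : F Mi = 2 * α * q Mi * max (1 - u Mi) 0 +
              2 * (1 - α) * (1 - q Mi) * max (1 + u Mi) 0 -
              2 * (2 * (1 - α) * (1 - q Mi)) := by
            simp only [hFdef, hmin]
          rw [hFMi']; linarith
        have hsum2 : F r + F Mi ≤ ∑ j, F j := by
          have e1 : F r + F Mi = ∑ j ∈ ({r, Mi} : Finset (Fin n)), F j :=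
            (Finset.sum_pair hne).symm
          rw [e1]
          exact Finset.sum_le_sum_of_subset_of_nonneg (Finset.subset_univ _)
            fun j _ _ => hF0 j
        have hPQsum : (1 - |τ|) * (P + Q) = 2 * (1 - |τ|) * (q Mi - q r) := by
          have : P + Q = 2 * (q Mi - q r) := by simp only [hP, hQ]; ring
          rw [this]; ring
        linarith
  · -- abstain
    rw [hpred, sum_loss_last n α q hq1]
    rcases le_total α (1 - q Mi) with hcase | hcase
    · rw [min_eq_left hcase]; linarith
    · rw [min_eq_right hcase]
      have hqMi : 1 - α ≤ q Mi := by linarith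
      have hBMi : (0:ℝ) ≤ 2 * (1 - α) * (1 - q Mi) := by nlinarith [hqle1 Mi]
      have hBAMi : 2 * (1 - α) * (1 - q Mi) ≤ 2 * α * q Mi := by nlinarith
      have h2 := eM_lb (2 * α * q Mi) (2 * (1 - α) * (1 - q Mi)) (u Mi) τ hBMi hBAMi
        hτ0.le hτ1.le (le_trans (min_le_left _ _) (hub Mi))
      have hFMi : (2 * α * q Mi - 2 * (1 - α) * (1 - q Mi)) * (1 - τ) ≤ F Mi := by
        have hmin : min (2 * α * q Mi) (2 * (1 - α) * (1 - q Mi)) =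
            2 * (1 - α) * (1 - q Mi) := min_eq_right hBAMi
        simp only [hFdef, hmin]; linarith
      have hprod : (2 * α * q Mi - 2 * (1 - α) * (1 - q Mi)) * (1 - |τ|) ≤
          (2 * α * q Mi - 2 * (1 - α) * (1 - q Mi)) * (1 - τ) :=
        mul_le_mul_of_nonneg_left (by linarith) (by linarith)
      have hexp2 : (2 * α * q Mi - 2 * (1 - α) * (1 - q Mi)) * (1 - |τ|) =
          2 * (1 - |τ|) * (α - 1 + q Mi) := by ring
      have := hFsum Mi
      linarith

lemma abstainLoss_nonneg (n : ℕ) (α : ℝ) (hα0 : 0 ≤ α) (y : Fin n) (t : Fin (n + 1)) :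
    0 ≤ abstainLoss n α y t := by
  unfold abstainLoss; split_ifs <;> norm_num [hα0]

lemma psiOVAa_nonneg (n : ℕ) (α : ℝ) (hα0 : 0 ≤ α) (hα1 : α ≤ 1) (y : Fin n) (u : Fin n → ℝ) :
    0 ≤ psiOVAa n α y u := by
  unfold psiOVAa
  have h1 : (0:ℝ) ≤ 2 * α * max (1 - u y) 0 :=
    mul_nonneg (by linarith) (le_max_right _ _)
  have h2 : (0:ℝ) ≤ ∑ i ∈ Finset.univ.erase y, max (1 + u i) 0 :=
    Finset.sum_nonneg fun i _ => le_max_right _ _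
  nlinarith

lemma bayes_le (n : ℕ) (α : ℝ) (q : Fin n → ℝ) (hq1 : ∑ i, q i = 1)
    (Mi : Fin n) (hM : ∀ i, q i ≤ q Mi) (t : Fin (n + 1)) :
    min α (1 - q Mi) ≤ ∑ y, q y * abstainLoss n α y t := by
  induction t using Fin.lastCases with
  | last => rw [sum_loss_last n α q hq1]; exact min_le_left _ _
  | cast i =>
      rw [sum_loss_cast n α q hq1 _ (Fin.castSucc_lt_last i).ne i (by simp)]
      exact le_trans (min_le_right _ _) (by linarith [hM i])

lemma psi_opt (n : ℕ) (α : ℝ) (q : Fin n → ℝ) (hq1 : ∑ i, q i = 1) :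
    ∑ y, q y * psiOVAa n α y
      (fun i => if 2 * α * q i ≤ 2 * (1 - α) * (1 - q i) then (-1:ℝ) else 1) =
    ∑ i, 2 * min (2 * α * q i) (2 * (1 - α) * (1 - q i)) := by
  rw [psi_rearrange n α q _ hq1]
  refine Finset.sum_congr rfl fun i _ => ?_
  by_cases h : 2 * α * q i ≤ 2 * (1 - α) * (1 - q i)
  · rw [if_pos h, min_eq_left h]
    norm_num
    ring
  · rw [if_neg h, min_eq_right (le_of_not_ge h)]
    norm_num
    ring

lemma sum_min_le_phi (n : ℕ) (α : ℝ) (hα0 : 0 ≤ α) (hα1 : α ≤ 1) (q u : Fin n → ℝ)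
    (hq0 : ∀ i, 0 ≤ q i) (hq1 : ∑ i, q i = 1) :
    ∑ i, 2 * min (2 * α * q i) (2 * (1 - α) * (1 - q i)) ≤ ∑ y, q y * psiOVAa n α y u := by
  rw [psi_rearrange n α q u hq1]
  refine Finset.sum_le_sum fun i _ => ?_
  have hqle1 : q i ≤ 1 := by
    calc q i ≤ ∑ y, q y := Finset.single_le_sum (fun y _ => hq0 y) (Finset.mem_univ i)
    _ = 1 := hq1
  exact phi_ge_min (2 * α * q i) (2 * (1 - α) * (1 - q i)) (u i)
    (mul_nonneg (by linarith) (hq0 i)) (by nlinarith)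

set_option maxHeartbeats 1000000 in
theorem psiOVAa_excess_risk_bound (n : ℕ) (hn : 2 ≤ n)
    (α : ℝ) (hα0 : 0 ≤ α) (hα1 : α ≤ 1 / 2)
    (τ' : ℝ) (hτ0 : -1 < τ') (hτ1 : τ' < 1)
    {X : Type*} [MeasurableSpace X] (D : Measure (X × Fin n)) [IsProbabilityMeasure D]
    (g : X → Fin n → ℝ) (hg : Measurable g) :
    (∫⁻ z, ENNReal.ofReal (abstainLoss n α z.2 (predOVA n τ' (g z.1))) ∂D) -
      (⨅ h : {h : X → Fin (n + 1) // Measurable h},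
        ∫⁻ z, ENNReal.ofReal (abstainLoss n α z.2 (h.1 z.1)) ∂D) ≤
    ((∫⁻ z, ENNReal.ofReal (psiOVAa n α z.2 (g z.1)) ∂D) -
      (⨅ g' : {g' : X → Fin n → ℝ // Measurable g'},
        ∫⁻ z, ENNReal.ofReal (psiOVAa n α z.2 (g'.1 z.1)) ∂D)) /
      ENNReal.ofReal (2 * (1 - |τ'|)) := by
  classical
  haveI : NeZero n := ⟨by omega⟩
  have hτa : |τ'| < 1 := abs_lt.2 ⟨hτ0, hτ1⟩
  have hkpos : (0:ℝ) < 2 * (1 - |τ'|) := by linarith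
  set k : ℝ≥0∞ := ENNReal.ofReal (2 * (1 - |τ'|)) with hk
  have hk0 : k ≠ 0 := by
    simp only [hk, ne_eq, ENNReal.ofReal_eq_zero, not_le]; linarith
  have hktop : k ≠ ∞ := ENNReal.ofReal_ne_top
  -- marginal and conditional decomposition
  set μ : Measure X := D.map Prod.fst with hμdef
  haveI : IsProbabilityMeasure μ := Measure.isProbabilityMeasure_map measurable_fst.aemeasurable
  set Sy : Fin n → Set (X × Fin n) := fun y => Prod.snd ⁻¹' {y} with hSydef
  have hSym : ∀ y, MeasurableSet (Sy y) := fun y => measurable_snd (measurableSet_singleton y)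
  set κ : Fin n → Measure X := fun y => (D.restrict (Sy y)).map Prod.fst with hκdef
  have hκapp : ∀ (y : Fin n) {s : Set X}, MeasurableSet s →
      κ y s = D (Prod.fst ⁻¹' s ∩ Sy y) := by
    intro y s hs
    simp only [hκdef]
    rw [Measure.map_apply measurable_fst hs, Measure.restrict_apply (measurable_fst hs)]
  have hκle : ∀ y, κ y ≤ μ := by
    intro y
    rw [Measure.le_iff]
    intro s hs
    rw [hκapp y hs, hμdef, Measure.map_apply measurable_fst hs]
    exact measure_mono Set.inter_subset_left
  have hκfin : ∀ y, IsFiniteMeasure (κ y) := by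
    intro y
    refine ⟨lt_of_le_of_lt ?_ (measure_lt_top μ Set.univ)⟩
    rw [hκapp y MeasurableSet.univ, hμdef, Measure.map_apply measurable_fst MeasurableSet.univ]
    exact measure_mono Set.inter_subset_left
  set p : Fin n → X → ℝ≥0∞ := fun y => (κ y).rnDeriv μ with hpdef
  have hpm : ∀ y, Measurable (p y) := fun y => Measure.measurable_rnDeriv _ _
  have hwd : ∀ y, μ.withDensity (p y) = κ y := by
    intro y
    haveI := hκfin y
    exact Measure.withDensity_rnDeriv_eq _ _ (Measure.absolutelyContinuous_of_le (hκle y))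
  have hlintκ : ∀ (y : Fin n) (f : X → ℝ≥0∞), Measurable f →
      ∫⁻ x, f x ∂(κ y) = ∫⁻ x, p y x * f x ∂μ := by
    intro y f hf
    rw [← hwd y, lintegral_withDensity_eq_lintegral_mul μ (hpm y) hf]
    rfl
  have hdis : ∀ (f : X × Fin n → ℝ≥0∞), Measurable f →
      ∫⁻ z, f z ∂D = ∑ y, ∫⁻ x, f (x, y) ∂(κ y) := by
    intro f hf
    have hfe : ∀ z, f z = ∑ y, Set.indicator (Sy y) f z := by
      intro z
      rw [Finset.sum_eq_single_of_mem z.2 (Finset.mem_univ _)]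
      · exact (Set.indicator_of_mem (by simp [hSydef]) f).symm
      · intro y _ hy
        exact Set.indicator_of_notMem (by simp [hSydef, Ne.symm hy]) f
    calc ∫⁻ z, f z ∂D = ∫⁻ z, ∑ y, Set.indicator (Sy y) f z ∂D := lintegral_congr hfe
      _ = ∑ y, ∫⁻ z, Set.indicator (Sy y) f z ∂D :=
          lintegral_finset_sum _ fun y _ => hf.indicator (hSym y)
      _ = ∑ y, ∫⁻ x, f (x, y) ∂(κ y) := by
          refine Finset.sum_congr rfl fun y _ => ?_
          rw [lintegral_indicator (hSym y)]
          simp only [hκdef]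
          have hmap : ∫⁻ x, f (x, y) ∂(Measure.map Prod.fst (D.restrict (Sy y))) =
              ∫⁻ z, f (z.1, y) ∂(D.restrict (Sy y)) :=
            lintegral_map (hf.comp measurable_prodMk_right) measurable_fst
          rw [hmap]
          refine setLIntegral_congr_fun (hSym y) (fun z hz => ?_)
          have h2 : z.2 = y := hz
          have : ((z.1, y) : X × Fin n) = z := by rw [← h2]
          rw [this]
  have hsum1 : ∀ᵐ x ∂μ, ∑ y, p y x = 1 := by
    have hmsum : Measurable fun x => ∑ y, p y x := Finset.measurable_sum _ fun y _ => hpm y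
    refine ae_eq_of_forall_setLIntegral_eq_of_sigmaFinite hmsum measurable_const ?_
    intro s hs _
    rw [lintegral_finset_sum _ (fun y _ => hpm y), setLIntegral_one]
    have hterm : ∀ y, ∫⁻ x in s, p y x ∂μ = κ y s := by
      intro y
      rw [← hwd y, withDensity_apply (p y) hs]
    have hU : (⋃ y, (Prod.fst ⁻¹' s ∩ Sy y)) = Prod.fst ⁻¹' s := by
      ext z; simp [hSydef]
    have hdisj : Pairwise (Function.onFun Disjoint fun y => Prod.fst ⁻¹' s ∩ Sy y) := by
      intro i j hij
      refine Set.disjoint_left.2 fun z hzi hzj => hij ?_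
      have h1 : z.2 = i := hzi.2
      have h2 : z.2 = j := hzj.2
      rw [← h1, h2]
    calc ∑ y, ∫⁻ x in s, p y x ∂μ = ∑ y, D (Prod.fst ⁻¹' s ∩ Sy y) := by
          refine Finset.sum_congr rfl fun y _ => ?_
          rw [hterm y, hκapp y hs]
      _ = D (Prod.fst ⁻¹' s) := by
          have hiu := measure_iUnion (μ := D) hdisj fun y => (measurable_fst hs).inter (hSym y)
          rw [hU] at hiu
          rw [hiu, tsum_fintype]
      _ = μ s := by rw [hμdef, Measure.map_apply measurable_fst hs]
  have hple1 : ∀ᵐ x ∂μ, ∀ y, p y x ≤ 1 := by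
    filter_upwards [hsum1] with x hx y
    calc p y x ≤ ∑ j, p j x :=
          Finset.single_le_sum (f := fun j => p j x) (fun j _ => zero_le) (Finset.mem_univ y)
      _ = 1 := hx
  have htoReal : ∀ x, (∀ y, p y x ≤ 1) → ∑ y, p y x = 1 →
      ∑ y, (p y x).toReal = 1 := by
    intro x hx h1
    rw [← ENNReal.toReal_sum (fun y _ => ne_top_of_le_ne_top ENNReal.one_ne_top (hx y)), h1,
      ENNReal.toReal_one]
  have hofReal : ∀ x, (∀ y, p y x ≤ 1) → ∀ (r : Fin n → ℝ), (∀ y, 0 ≤ r y) →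
      ∑ y, p y x * ENNReal.ofReal (r y) =
        ENNReal.ofReal (∑ y, (p y x).toReal * r y) := by
    intro x hx r hr
    rw [ENNReal.ofReal_sum_of_nonneg (fun y _ => mul_nonneg ENNReal.toReal_nonneg (hr y))]
    refine Finset.sum_congr rfl fun y _ => ?_
    rw [ENNReal.ofReal_mul ENNReal.toReal_nonneg,
      ENNReal.ofReal_toReal (ne_top_of_le_ne_top ENNReal.one_ne_top (hx y))]
  -- risk rewriting
  have hrisk : ∀ (Λ : Fin n → X → ℝ), (∀ y, Measurable (Λ y)) →
      ∫⁻ z, ENNReal.ofReal (Λ z.2 z.1) ∂D =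
        ∫⁻ x, ∑ y, p y x * ENNReal.ofReal (Λ y x) ∂μ := by
    intro Λ hΛ
    have hfm : Measurable fun z : X × Fin n => ENNReal.ofReal (Λ z.2 z.1) :=
      (measurable_from_prod_countable_left fun y => hΛ y).ennreal_ofReal
    rw [hdis _ hfm,
      lintegral_finset_sum _ (f := fun y x => p y x * ENNReal.ofReal (Λ y x)) (fun y _ => (hpm y).mul (hΛ y).ennreal_ofReal)]
    exact Finset.sum_congr rfl fun y _ => hlintκ y _ (hΛ y).ennreal_ofReal
  -- measurability of the various integrands
  have hψu : ∀ y : Fin n, Measurable fun u : Fin n → ℝ => psiOVAa n α y u := by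
    intro y
    unfold psiOVAa
    apply Measurable.add
    · exact measurable_const.mul
        ((measurable_const.sub (measurable_pi_apply y)).max measurable_const)
    · exact measurable_const.mul (Finset.measurable_sum _ fun i _ =>
        (measurable_const.add (measurable_pi_apply i)).max measurable_const)
  have hpredm : Measurable fun x => predOVA n τ' (g x) := (predOVA_measurable n τ').comp hg
  have hLm : ∀ y : Fin n, Measurable fun x => abstainLoss n α y (predOVA n τ' (g x)) :=
    fun y => (measurable_of_countable (abstainLoss n α y)).comp hpredm
  have hψm : ∀ y : Fin n, Measurable fun x => psiOVAa n α y (g x) :=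
    fun y => (hψu y).comp hg
  -- the sup function
  have hne : (Finset.univ : Finset (Fin n)).Nonempty := Finset.univ_nonempty
  set mq : X → ℝ := fun x => Finset.univ.sup' hne (fun y => (p y x).toReal) with hmqdef
  have hmqm : Measurable mq := by
    have h1 : Measurable (Finset.univ.sup' hne (fun y => fun x => (p y x).toReal)) :=
      Finset.measurable_sup' hne fun y _ => (hpm y).ennreal_toReal
    have h2 : mq = Finset.univ.sup' hne (fun y => fun x => (p y x).toReal) := by
      funext x
      rw [hmqdef, Finset.sup'_apply]
    rw [h2]; exact h1
  set l : X → ℝ≥0∞ := fun x => ENNReal.ofReal (min α (1 - mq x)) with hldef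
  have hlm : Measurable l := (measurable_const.min (measurable_const.sub hmqm)).ennreal_ofReal
  -- pointwise Bayes bound
  have hcond_ge : ∀ (t : X → Fin (n + 1)), ∀ᵐ x ∂μ,
      l x ≤ ∑ y, p y x * ENNReal.ofReal (abstainLoss n α y (t x)) := by
    intro t
    filter_upwards [hsum1, hple1] with x h1 h2
    obtain ⟨Mi, -, hMi⟩ := Finset.exists_mem_eq_sup' hne (fun y => (p y x).toReal)
    have hMmax : ∀ i, (p i x).toReal ≤ (p Mi x).toReal := by
      intro i
      calc (p i x).toReal ≤ _ := Finset.le_sup' (fun y => (p y x).toReal) (Finset.mem_univ i)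
        _ = (p Mi x).toReal := hMi
    have hsum : ∑ y, (p y x).toReal = 1 := htoReal x h2 h1
    rw [hofReal x h2 _ (fun y => abstainLoss_nonneg n α hα0 y _)]
    simp only [hldef]
    apply ENNReal.ofReal_le_ofReal
    have hmq : mq x = (p Mi x).toReal := by rw [hmqdef]; exact hMi
    rw [hmq]
    exact bayes_le n α _ hsum Mi hMmax (t x)
  -- lower bound on the Bayes abstain risk
  have hBlb : ∫⁻ x, l x ∂μ ≤ ⨅ h : {h : X → Fin (n + 1) // Measurable h},
      ∫⁻ z, ENNReal.ofReal (abstainLoss n α z.2 (h.1 z.1)) ∂D := by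
    refine le_iInf fun h => ?_
    rw [hrisk (fun y x => abstainLoss n α y (h.1 x))
      (fun y => (measurable_of_countable (abstainLoss n α y)).comp h.2)]
    exact lintegral_mono_ae (hcond_ge h.1)
  -- upper bound on the optimal surrogate risk
  set mR : X → ℝ≥0∞ := fun x => ENNReal.ofReal
    (∑ i, 2 * min (2 * α * (p i x).toReal) (2 * (1 - α) * (1 - (p i x).toReal))) with hmRdef
  have hmRm : Measurable mR := by
    refine Measurable.ennreal_ofReal (Finset.measurable_sum _ fun i _ => ?_)
    exact (((hpm i).ennreal_toReal.const_mul (2 * α)).min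
      ((measurable_const.sub (hpm i).ennreal_toReal).const_mul (2 * (1 - α)))).const_mul 2
  set gs : X → Fin n → ℝ := fun x i =>
    if 2 * α * (p i x).toReal ≤ 2 * (1 - α) * (1 - (p i x).toReal) then (-1:ℝ) else 1
    with hgsdef
  have hgsm : Measurable gs := by
    refine measurable_pi_lambda _ fun i => Measurable.ite ?_ measurable_const measurable_const
    exact measurableSet_le ((hpm i).ennreal_toReal.const_mul (2 * α))
      ((measurable_const.sub (hpm i).ennreal_toReal).const_mul (2 * (1 - α)))
  have hDub : (⨅ g' : {g' : X → Fin n → ℝ // Measurable g'},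
      ∫⁻ z, ENNReal.ofReal (psiOVAa n α z.2 (g'.1 z.1)) ∂D) ≤ ∫⁻ x, mR x ∂μ := by
    refine le_trans (iInf_le _ ⟨gs, hgsm⟩) ?_
    rw [hrisk (fun y x => psiOVAa n α y (gs x)) (fun y => (hψu y).comp hgsm)]
    refine lintegral_mono_ae ?_
    filter_upwards [hsum1, hple1] with x h1 h2
    rw [hofReal x h2 _ (fun y => psiOVAa_nonneg n α hα0 (by linarith) y _)]
    have hsum : ∑ y, (p y x).toReal = 1 := htoReal x h2 h1
    simp only [hmRdef]
    apply ENNReal.ofReal_le_ofReal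
    refine le_of_eq ?_
    have := psi_opt n α (fun y => (p y x).toReal) hsum
    simpa [hgsdef] using this
  -- finiteness
  have hl_fin : ∫⁻ x, l x ∂μ ≠ ∞ := by
    have hb : ∫⁻ x, l x ∂μ ≤ ENNReal.ofReal α := by
      calc ∫⁻ x, l x ∂μ ≤ ∫⁻ _, ENNReal.ofReal α ∂μ :=
            lintegral_mono fun x => ENNReal.ofReal_le_ofReal (min_le_left _ _)
        _ = ENNReal.ofReal α := by rw [lintegral_const, measure_univ, mul_one]
    exact ne_of_lt (lt_of_le_of_lt hb ENNReal.ofReal_lt_top)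
  have hm_fin : ∫⁻ x, mR x ∂μ ≠ ∞ := by
    have hb : ∫⁻ x, mR x ∂μ ≤ ENNReal.ofReal (4 * n) := by
      have hpt : ∀ x, mR x ≤ ENNReal.ofReal (4 * n) := by
        intro x
        simp only [hmRdef]
        apply ENNReal.ofReal_le_ofReal
        calc ∑ i, 2 * min (2 * α * (p i x).toReal) (2 * (1 - α) * (1 - (p i x).toReal)) ≤
              ∑ _i : Fin n, (4:ℝ) := by
              refine Finset.sum_le_sum fun i _ => ?_
              have ht0 : (0:ℝ) ≤ (p i x).toReal := ENNReal.toReal_nonneg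
              have hB : 2 * (1 - α) * (1 - (p i x).toReal) ≤ 2 := by nlinarith
              have := min_le_right (2 * α * (p i x).toReal)
                (2 * (1 - α) * (1 - (p i x).toReal))
              linarith
          _ = 4 * n := by rw [Finset.sum_const, Finset.card_univ, Fintype.card_fin]; ring
      calc ∫⁻ x, mR x ∂μ ≤ ∫⁻ _, ENNReal.ofReal (4 * n) ∂μ := lintegral_mono hpt
        _ = ENNReal.ofReal (4 * n) := by rw [lintegral_const, measure_univ, mul_one]
    exact ne_of_lt (lt_of_le_of_lt hb ENNReal.ofReal_lt_top)
  -- pointwise domination m ≤ c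
  have hmc : ∀ᵐ x ∂μ, mR x ≤ ∑ y, p y x * ENNReal.ofReal (psiOVAa n α y (g x)) := by
    filter_upwards [hsum1, hple1] with x h1 h2
    rw [hofReal x h2 _ (fun y => psiOVAa_nonneg n α hα0 (by linarith) y _)]
    simp only [hmRdef]
    exact ENNReal.ofReal_le_ofReal (sum_min_le_phi n α hα0 (by linarith) _ (g x)
      (fun i => ENNReal.toReal_nonneg) (htoReal x h2 h1))
  -- the key pointwise inequality
  have hkey : ∀ᵐ x ∂μ,
      ((∑ y, p y x * ENNReal.ofReal (abstainLoss n α y (predOVA n τ' (g x)))) - l x) * k ≤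
      (∑ y, p y x * ENNReal.ofReal (psiOVAa n α y (g x))) - mR x := by
    filter_upwards [hsum1, hple1] with x h1 h2
    have hsum : ∑ y, (p y x).toReal = 1 := htoReal x h2 h1
    have hq0 : ∀ i : Fin n, 0 ≤ (p i x).toReal := fun i => ENNReal.toReal_nonneg
    have hqle1 : ∀ i : Fin n, (p i x).toReal ≤ 1 := by
      intro i
      calc (p i x).toReal ≤ ∑ y, (p y x).toReal :=
            Finset.single_le_sum (fun y _ => hq0 y) (Finset.mem_univ i)
        _ = 1 := hsum
    obtain ⟨Mi, -, hMi⟩ := Finset.exists_mem_eq_sup' hne (fun y => (p y x).toReal)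
    have hMmax : ∀ i, (p i x).toReal ≤ (p Mi x).toReal := by
      intro i
      calc (p i x).toReal ≤ _ := Finset.le_sup' (fun y => (p y x).toReal) (Finset.mem_univ i)
        _ = (p Mi x).toReal := hMi
    have haR := hofReal x h2 _ (fun y => abstainLoss_nonneg n α hα0 y (predOVA n τ' (g x)))
    have hcR := hofReal x h2 _ (fun y => psiOVAa_nonneg n α hα0 (by linarith) y (g x))
    have hlx : l x = ENNReal.ofReal (min α (1 - (p Mi x).toReal)) := by
      simp only [hldef, hmqdef]
      rw [hMi]
    rw [haR, hcR, hlx]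
    simp only [hmRdef]
    set A' : ℝ := ∑ y, (p y x).toReal * abstainLoss n α y (predOVA n τ' (g x)) with hA'
    set L' : ℝ := min α (1 - (p Mi x).toReal) with hL'
    set C' : ℝ := ∑ y, (p y x).toReal * psiOVAa n α y (g x) with hC'
    set M' : ℝ := ∑ i, 2 * min (2 * α * (p i x).toReal)
      (2 * (1 - α) * (1 - (p i x).toReal)) with hM'
    have hL'0 : 0 ≤ L' := le_min hα0 (by linarith [hqle1 Mi])
    have hM'0 : 0 ≤ M' := by
      refine Finset.sum_nonneg fun i _ => ?_
      have ha1 : (0:ℝ) ≤ 2 * α * (p i x).toReal := mul_nonneg (by linarith) (hq0 i)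
      have ha2 : (0:ℝ) ≤ 2 * (1 - α) * (1 - (p i x).toReal) :=
        mul_nonneg (by linarith) (by linarith [hqle1 i])
      have := le_min ha1 ha2
      linarith
    have hcore := core_calibration n α τ' hα0 hα1 hτ0 hτ1 (fun y => (p y x).toReal) (g x)
      hq0 hsum Mi hMmax
    rcases le_total A' L' with hAL | hAL
    · have hz : ENNReal.ofReal A' - ENNReal.ofReal L' = 0 :=
        tsub_eq_zero_of_le (ENNReal.ofReal_le_ofReal hAL)
      rw [hz, zero_mul]
      exact zero_le
    · rw [hk, ← ENNReal.ofReal_sub _ hL'0, ← ENNReal.ofReal_mul (by linarith : 0 ≤ A' - L'),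
        ← ENNReal.ofReal_sub _ hM'0]
      apply ENNReal.ofReal_le_ofReal
      linarith [hcore]
  -- assemble
  rw [hrisk (fun y x => abstainLoss n α y (predOVA n τ' (g x))) hLm,
    hrisk (fun y x => psiOVAa n α y (g x)) hψm]
  refine le_trans (tsub_le_tsub_left hBlb _) ?_
  refine le_trans ?_ (ENNReal.div_le_div_right (tsub_le_tsub_left hDub _) k)
  rw [ENNReal.le_div_iff_mul_le (Or.inl hk0) (Or.inl hktop)]
  have haRm : Measurable fun x => ∑ y, p y x * ENNReal.ofReal
      (abstainLoss n α y (predOVA n τ' (g x))) :=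
    Finset.measurable_sum _ fun y _ => (hpm y).mul (hLm y).ennreal_ofReal
  have hcRm : Measurable fun x => ∑ y, p y x * ENNReal.ofReal (psiOVAa n α y (g x)) :=
    Finset.measurable_sum _ fun y _ => (hpm y).mul (hψm y).ennreal_ofReal
  have e1 : (∫⁻ x, ∑ y, p y x * ENNReal.ofReal
        (abstainLoss n α y (predOVA n τ' (g x))) ∂μ) - ∫⁻ x, l x ∂μ =
      ∫⁻ x, (∑ y, p y x * ENNReal.ofReal (abstainLoss n α y (predOVA n τ' (g x)))) - l x ∂μ :=
    (lintegral_sub hlm hl_fin (hcond_ge _)).symm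
  have e2 : (∫⁻ x, ∑ y, p y x * ENNReal.ofReal (psiOVAa n α y (g x)) ∂μ) -
        ∫⁻ x, mR x ∂μ =
      ∫⁻ x, (∑ y, p y x * ENNReal.ofReal (psiOVAa n α y (g x))) - mR x ∂μ :=
    (lintegral_sub hmRm hm_fin hmc).symm
  rw [e1, e2, ← lintegral_mul_const k (f := fun x => (∑ y, p y x * ENNReal.ofReal (abstainLoss n α y (predOVA n τ' (g x)))) - l x) (haRm.sub hlm)]
  exact lintegral_mono_ae hkey
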